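/- arXiv:1812.03769 — 2 statements merged into one kernel-verified Lean document; each statement's English description precedes it below -/
import Mathlib

section
/- Let the sequences {w^k} and {w̃^k} be generated by GS-ADMM. Then for every k, w̃^k ∈ M and, for all w = (x,y,λ) ∈ M, h(u) − h(ũ^k) + ⟨w − w̃^k, J(w̃^k) + Q(w̃^k − w^k)⟩ ≥ 0, where Q is the linear map whose value at δw = (δx_1,…,δx_p, δy_1,…,δy_q, δλ) has i-th x-component β[(σ_1+1)A_iᵀA_i δx_i − A_iᵀ(Σ_{l=1}^p A_l δx_l)] for i = 1,…,p, j-th y-component (σ_2+1)β B_jᵀB_j δy_j − τ B_jᵀ δλ for j = 1,…,q, and λ-component −Σ_{j=1}^q B_j δy_j + (1/β)δλ. -/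
open scoped RealInnerProductSpace
open Matrix Filter

/-- Multiplication of a matrix with a vector, viewed as a map between Euclidean spaces. -/
noncomputable def mv {n m : ℕ} (M : Matrix (Fin n) (Fin m) ℝ)
    (v : EuclideanSpace ℝ (Fin m)) : EuclideanSpace ℝ (Fin n) :=
  WithLp.toLp 2 (M.mulVec v)

/-- `sA A x = Σ_i A_i x_i`. -/
noncomputable def sA {p n : ℕ} {m : Fin p → ℕ}
    (A : ∀ i, Matrix (Fin n) (Fin (m i)) ℝ)
    (x : ∀ i, EuclideanSpace ℝ (Fin (m i))) : EuclideanSpace ℝ (Fin n) :=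
  ∑ i, mv (A i) (x i)

/-- The augmented Lagrangian
`L_β(x,y,λ) = Σ_i f_i(x_i) + Σ_j g_j(y_j) − ⟨λ, Ax + By − c⟩ + (β/2)‖Ax + By − c‖²`. -/
noncomputable def Lag {p q n : ℕ} {m : Fin p → ℕ} {d : Fin q → ℕ}
    (A : ∀ i, Matrix (Fin n) (Fin (m i)) ℝ)
    (B : ∀ j, Matrix (Fin n) (Fin (d j)) ℝ)
    (c : EuclideanSpace ℝ (Fin n))
    (f : ∀ i, EuclideanSpace ℝ (Fin (m i)) → ℝ)
    (g : ∀ j, EuclideanSpace ℝ (Fin (d j)) → ℝ)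
    (β : ℝ)
    (x : ∀ i, EuclideanSpace ℝ (Fin (m i)))
    (y : ∀ j, EuclideanSpace ℝ (Fin (d j)))
    (lam : EuclideanSpace ℝ (Fin n)) : ℝ :=
  (∑ i, f i (x i)) + (∑ j, g j (y j)) - ⟪lam, sA A x + sA B y - c⟫
    + β / 2 * ‖sA A x + sA B y - c‖ ^ 2

/- ### Auxiliary lemmas -/

lemma mv_add {n m : ℕ} (M : Matrix (Fin n) (Fin m) ℝ) (v w : EuclideanSpace ℝ (Fin m)) :
    mv M (v + w) = mv M v + mv M w := by
  simp only [mv, WithLp.ofLp_add, Matrix.mulVec_add, WithLp.toLp_add]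

lemma mv_smul {n m : ℕ} (M : Matrix (Fin n) (Fin m) ℝ) (a : ℝ) (v : EuclideanSpace ℝ (Fin m)) :
    mv M (a • v) = a • mv M v := by
  simp only [mv, WithLp.ofLp_smul, Matrix.mulVec_smul, WithLp.toLp_smul]

lemma mv_sub {n m : ℕ} (M : Matrix (Fin n) (Fin m) ℝ) (v w : EuclideanSpace ℝ (Fin m)) :
    mv M (v - w) = mv M v - mv M w := by
  have h := mv_add M w (v - w); rw [add_sub_cancel] at h; rw [h]; abel

lemma inner_mv {n m : ℕ} (M : Matrix (Fin n) (Fin m) ℝ) (v : EuclideanSpace ℝ (Fin m))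
    (w : EuclideanSpace ℝ (Fin n)) : ⟪mv M v, w⟫ = ⟪v, mv Mᵀ w⟫ := by
  simp only [mv, PiLp.inner_apply, PiLp.toLp_apply, RCLike.inner_apply, conj_trivial, Matrix.mulVec,
    dotProduct, Matrix.transpose_apply, Finset.sum_mul, Finset.mul_sum]
  rw [Finset.sum_comm]
  congr 1; ext i; congr 1; ext j; ring

lemma sA_sub {p n : ℕ} {m : Fin p → ℕ} (A : ∀ i, Matrix (Fin n) (Fin (m i)) ℝ)
    (u w : ∀ i, EuclideanSpace ℝ (Fin (m i))) :
    sA A (fun l => u l - w l) = sA A u - sA A w := by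
  simp only [sA, ← Finset.sum_sub_distrib]
  exact Finset.sum_congr rfl fun l _ => mv_sub (A l) (u l) (w l)

lemma sum_update {ι : Type*} [Fintype ι] [DecidableEq ι] {α : ι → Type*} {M : Type*}
    [AddCommMonoid M] (F : ∀ l, α l → M) (x0 : ∀ l, α l) (i : ι) (z : α i) :
    ∑ l, F l (Function.update x0 i z l)
      = F i z + ∑ l ∈ Finset.univ \ {i}, F l (x0 l) := by
  rw [Finset.sum_eq_add_sum_sdiff_singleton_of_mem (Finset.mem_univ i), Function.update_self]
  congr 1
  refine Finset.sum_congr rfl fun l hl => ?_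
  rw [Function.update_of_ne (Finset.notMem_singleton.mp (Finset.mem_sdiff.mp hl).2)]

lemma quad_expand {n m : ℕ} (M : Matrix (Fin n) (Fin m) ℝ)
    (lam r : EuclideanSpace ℝ (Fin n)) (x0 xs v : EuclideanSpace ℝ (Fin m)) (β γ t : ℝ) :
    -⟪lam, mv M (xs + t • v) + r⟫ + β / 2 * ‖mv M (xs + t • v) + r‖ ^ 2
      + γ / 2 * ‖mv M (xs + t • v - x0)‖ ^ 2
    = (-⟪lam, mv M xs + r⟫ + β / 2 * ‖mv M xs + r‖ ^ 2 + γ / 2 * ‖mv M (xs - x0)‖ ^ 2)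
      + t * (-⟪lam, mv M v⟫ + β * ⟪mv M xs + r, mv M v⟫ + γ * ⟪mv M (xs - x0), mv M v⟫)
      + t ^ 2 * ((β + γ) / 2 * ‖mv M v‖ ^ 2) := by
  have h1 : xs + t • v - x0 = (xs - x0) + t • v := by abel
  rw [h1, mv_add, mv_add, mv_smul]
  have h2 : mv M xs + t • mv M v + r = (mv M xs + r) + t • mv M v := by abel
  rw [h2, norm_add_sq_real (mv M xs + r) (t • mv M v),
    norm_add_sq_real (mv M (xs - x0)) (t • mv M v), norm_smul, inner_add_right,
    real_inner_smul_right]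
  simp only [real_inner_smul_right]
  simp only [Real.norm_eq_abs, mul_pow, sq_abs]
  ring

lemma nonneg_of_forall_t (a b : ℝ) (h : ∀ t : ℝ, 0 < t → t ≤ 1 → 0 ≤ a + t * b) : 0 ≤ a := by
  by_contra hn
  push_neg at hn
  have hb1 : (0:ℝ) < |b| + 1 := by positivity
  set t := min 1 ((-a) / (|b| + 1)) with ht
  have htpos : 0 < t := lt_min one_pos (div_pos (by linarith) hb1)
  have ht1 : t ≤ 1 := min_le_left _ _
  have h2 : t ≤ (-a) / (|b| + 1) := min_le_right _ _
  have h3 : t * b ≤ t * |b| := mul_le_mul_of_nonneg_left (le_abs_self b) htpos.le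
  have h4 : t * |b| < -a := by
    calc t * |b| ≤ ((-a) / (|b| + 1)) * |b| :=
          mul_le_mul_of_nonneg_right h2 (abs_nonneg b)
      _ < -a := by
          rw [div_mul_eq_mul_div, div_lt_iff₀ hb1]
          nlinarith [abs_nonneg b]
  have := h t htpos ht1
  linarith

lemma key_vi {E : Type*} [NormedAddCommGroup E] [InnerProductSpace ℝ E]
    {X : Set E} (hX : Convex ℝ X) {F : E → ℝ} (hF : ConvexOn ℝ Set.univ F)
    {xs : E} (hxs : xs ∈ X) (φ : E → ℝ)
    (hmin : ∀ z ∈ X, F xs + φ xs ≤ F z + φ z)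
    (a b : E → ℝ)
    (hφ : ∀ v : E, ∀ t : ℝ, φ (xs + t • v) = φ xs + t * a v + t ^ 2 * b v) :
    ∀ z ∈ X, 0 ≤ F z - F xs + a (z - xs) := by
  intro z hz
  apply nonneg_of_forall_t _ (b (z - xs))
  intro t htpos ht1
  have heq : xs + t • (z - xs) = (1 - t) • xs + t • z := by module
  have hmem : xs + t • (z - xs) ∈ X := by
    rw [heq]; exact hX hxs hz (by linarith) htpos.le (by ring)
  have hconv : F (xs + t • (z - xs)) ≤ (1 - t) * F xs + t * F z := by
    rw [heq]
    simpa [smul_eq_mul] using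
      hF.2 (Set.mem_univ xs) (Set.mem_univ z) (by linarith : (0:ℝ) ≤ 1 - t) htpos.le (by ring)
  have hm := hmin _ hmem
  rw [hφ (z - xs) t] at hm
  have h6 : 0 ≤ t * ((F z - F xs + a (z - xs)) + t * b (z - xs)) := by nlinarith
  nlinarith [mul_pos htpos htpos]

lemma Lag_update_x {p q n : ℕ} {m : Fin p → ℕ} {d : Fin q → ℕ}
    (A : ∀ i, Matrix (Fin n) (Fin (m i)) ℝ)
    (B : ∀ j, Matrix (Fin n) (Fin (d j)) ℝ)
    (c : EuclideanSpace ℝ (Fin n))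
    (f : ∀ i, EuclideanSpace ℝ (Fin (m i)) → ℝ)
    (g : ∀ j, EuclideanSpace ℝ (Fin (d j)) → ℝ)
    (β : ℝ) (x0 : ∀ i, EuclideanSpace ℝ (Fin (m i)))
    (y0 : ∀ j, EuclideanSpace ℝ (Fin (d j)))
    (l0 : EuclideanSpace ℝ (Fin n)) (i : Fin p) (z : EuclideanSpace ℝ (Fin (m i))) :
    Lag A B c f g β (Function.update x0 i z) y0 l0
      = f i z + ((∑ l ∈ Finset.univ \ {i}, f l (x0 l)) + ∑ j, g j (y0 j))
        + (-⟪l0, mv (A i) z + ((∑ l ∈ Finset.univ \ {i}, mv (A l) (x0 l)) + sA B y0 - c)⟫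
          + β / 2 * ‖mv (A i) z
              + ((∑ l ∈ Finset.univ \ {i}, mv (A l) (x0 l)) + sA B y0 - c)‖ ^ 2) := by
  have hs : sA A (Function.update x0 i z) + sA B y0 - c
      = mv (A i) z + ((∑ l ∈ Finset.univ \ {i}, mv (A l) (x0 l)) + sA B y0 - c) := by
    rw [sA, sum_update (fun l v => mv (A l) v) x0 i z]; abel
  rw [Lag, hs, sum_update f x0 i z]
  ring

lemma Lag_update_y {p q n : ℕ} {m : Fin p → ℕ} {d : Fin q → ℕ}
    (A : ∀ i, Matrix (Fin n) (Fin (m i)) ℝ)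
    (B : ∀ j, Matrix (Fin n) (Fin (d j)) ℝ)
    (c : EuclideanSpace ℝ (Fin n))
    (f : ∀ i, EuclideanSpace ℝ (Fin (m i)) → ℝ)
    (g : ∀ j, EuclideanSpace ℝ (Fin (d j)) → ℝ)
    (β : ℝ) (x0 : ∀ i, EuclideanSpace ℝ (Fin (m i)))
    (y0 : ∀ j, EuclideanSpace ℝ (Fin (d j)))
    (l0 : EuclideanSpace ℝ (Fin n)) (j : Fin q) (z : EuclideanSpace ℝ (Fin (d j))) :
    Lag A B c f g β x0 (Function.update y0 j z) l0
      = g j z + ((∑ i, f i (x0 i)) + ∑ l ∈ Finset.univ \ {j}, g l (y0 l))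
        + (-⟪l0, mv (B j) z + (sA A x0 + (∑ l ∈ Finset.univ \ {j}, mv (B l) (y0 l)) - c)⟫
          + β / 2 * ‖mv (B j) z
              + (sA A x0 + (∑ l ∈ Finset.univ \ {j}, mv (B l) (y0 l)) - c)‖ ^ 2) := by
  have hs : sA A x0 + sA B (Function.update y0 j z) - c
      = mv (B j) z + (sA A x0 + (∑ l ∈ Finset.univ \ {j}, mv (B l) (y0 l)) - c) := by
    simp only [sA]
    rw [sum_update (fun l v => mv (B l) v) y0 j z]; abel
  rw [Lag, hs, sum_update g y0 j z]
  ring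


/-- the GS-ADMM prediction step satisfies the variational inequality
`h(u) − h(ũ^k) + ⟨w − w̃^k, J(w̃^k) + Q(w̃^k − w^k)⟩ ≥ 0` for all `w ∈ M`. -/
theorem stmt3
    {p q n : ℕ} (hp : 1 ≤ p) (hq : 1 ≤ q)
    {m : Fin p → ℕ} {d : Fin q → ℕ}
    (A : ∀ i, Matrix (Fin n) (Fin (m i)) ℝ)
    (B : ∀ j, Matrix (Fin n) (Fin (d j)) ℝ)
    (hA : ∀ i, LinearIndependent ℝ (fun l => (A i)ᵀ l))
    (hB : ∀ j, LinearIndependent ℝ (fun l => (B j)ᵀ l))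
    (c : EuclideanSpace ℝ (Fin n))
    (X : ∀ i, Set (EuclideanSpace ℝ (Fin (m i))))
    (Y : ∀ j, Set (EuclideanSpace ℝ (Fin (d j))))
    (hXne : ∀ i, (X i).Nonempty) (hXcl : ∀ i, IsClosed (X i)) (hXcv : ∀ i, Convex ℝ (X i))
    (hYne : ∀ j, (Y j).Nonempty) (hYcl : ∀ j, IsClosed (Y j)) (hYcv : ∀ j, Convex ℝ (Y j))
    (f : ∀ i, EuclideanSpace ℝ (Fin (m i)) → ℝ)
    (g : ∀ j, EuclideanSpace ℝ (Fin (d j)) → ℝ)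
    (hf : ∀ i, ConvexOn ℝ Set.univ (f i))
    (hg : ∀ j, ConvexOn ℝ Set.univ (g j))
    (β σ1 σ2 τ s : ℝ) (hβ : 0 < β)
    (x : ℕ → ∀ i, EuclideanSpace ℝ (Fin (m i)))
    (y : ℕ → ∀ j, EuclideanSpace ℝ (Fin (d j)))
    (lam lamh : ℕ → EuclideanSpace ℝ (Fin n))
    (hxmin : ∀ k i, x (k+1) i ∈ X i ∧ ∀ z ∈ X i,
      Lag A B c f g β (Function.update (x k) i (x (k+1) i)) (y k) (lam k)
          + σ1 * β / 2 * ‖mv (A i) (x (k+1) i - x k i)‖ ^ 2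
        ≤ Lag A B c f g β (Function.update (x k) i z) (y k) (lam k)
          + σ1 * β / 2 * ‖mv (A i) (z - x k i)‖ ^ 2)
    (hlamh : ∀ k, lamh k = lam k - (τ * β) • (sA A (x (k+1)) + sA B (y k) - c))
    (hymin : ∀ k j, y (k+1) j ∈ Y j ∧ ∀ z ∈ Y j,
      Lag A B c f g β (x (k+1)) (Function.update (y k) j (y (k+1) j)) (lamh k)
          + σ2 * β / 2 * ‖mv (B j) (y (k+1) j - y k j)‖ ^ 2
        ≤ Lag A B c f g β (x (k+1)) (Function.update (y k) j z) (lamh k)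
          + σ2 * β / 2 * ‖mv (B j) (z - y k j)‖ ^ 2)
    (hlam : ∀ k, lam (k+1) = lamh k - (s * β) • (sA A (x (k+1)) + sA B (y (k+1)) - c))
    : ∀ k : ℕ,
      (∀ i, x (k+1) i ∈ X i) ∧ (∀ j, y (k+1) j ∈ Y j) ∧
      (let tl : EuclideanSpace ℝ (Fin n) :=
        lam k - β • (sA A (x (k+1)) + sA B (y k) - c);
      ∀ (xx : ∀ i, EuclideanSpace ℝ (Fin (m i)))
        (yy : ∀ j, EuclideanSpace ℝ (Fin (d j)))
        (ll : EuclideanSpace ℝ (Fin n)),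
        (∀ i, xx i ∈ X i) → (∀ j, yy j ∈ Y j) →
        ((∑ i, f i (xx i)) + (∑ j, g j (yy j))
            - ((∑ i, f i (x (k+1) i)) + (∑ j, g j (y (k+1) j)))
          + (∑ i, ⟪xx i - x (k+1) i,
              -(mv (A i)ᵀ tl)
                + β • ((σ1 + 1) • mv (A i)ᵀ (mv (A i) (x (k+1) i - x k i))
                    - mv (A i)ᵀ (sA A (fun l => x (k+1) l - x k l)))⟫)
          + (∑ j, ⟪yy j - y (k+1) j,
              -(mv (B j)ᵀ tl)
                + (((σ2 + 1) * β) • mv (B j)ᵀ (mv (B j) (y (k+1) j - y k j))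
                    - τ • mv (B j)ᵀ (tl - lam k))⟫)
          + ⟪ll - tl,
              (sA A (x (k+1)) + sA B (y (k+1)) - c)
                + (-(sA B (fun j => y (k+1) j - y k j)) + β⁻¹ • (tl - lam k))⟫) ≥ 0) := by
  intro k
  have hXmem : ∀ i, x (k+1) i ∈ X i := fun i => (hxmin k i).1
  have hYmem : ∀ j, y (k+1) j ∈ Y j := fun j => (hymin k j).1
  refine ⟨hXmem, hYmem, ?_⟩
  intro tl xx yy ll hxx hyy
  have htl : tl = lam k - β • (sA A (x (k+1)) + sA B (y k) - c) := rfl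
  -- the x-block variational inequalities
  have hxineq : ∀ i, 0 ≤ f i (xx i) - f i (x (k+1) i) +
      ⟪xx i - x (k+1) i,
        -(mv (A i)ᵀ tl)
          + β • ((σ1 + 1) • mv (A i)ᵀ (mv (A i) (x (k+1) i - x k i))
              - mv (A i)ᵀ (sA A (fun l => x (k+1) l - x k l)))⟫ := by
    intro i
    have hVI := key_vi (hXcv i) (hf i) (hXmem i)
      (fun z => ((∑ l ∈ Finset.univ \ {i}, f l (x k l)) + ∑ j, g j (y k j))
        + (-⟪lam k, mv (A i) z
              + ((∑ l ∈ Finset.univ \ {i}, mv (A l) (x k l)) + sA B (y k) - c)⟫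
          + β / 2 * ‖mv (A i) z
              + ((∑ l ∈ Finset.univ \ {i}, mv (A l) (x k l)) + sA B (y k) - c)‖ ^ 2
          + σ1 * β / 2 * ‖mv (A i) (z - x k i)‖ ^ 2))
      (fun z hz => by
        have h := (hxmin k i).2 z hz
        rw [Lag_update_x, Lag_update_x] at h
        linarith)
      (fun v => -⟪lam k, mv (A i) v⟫
        + β * ⟪mv (A i) (x (k+1) i)
            + ((∑ l ∈ Finset.univ \ {i}, mv (A l) (x k l)) + sA B (y k) - c), mv (A i) v⟫
        + (σ1 * β) * ⟪mv (A i) (x (k+1) i - x k i), mv (A i) v⟫)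
      (fun v => (β + σ1 * β) / 2 * ‖mv (A i) v‖ ^ 2)
      (fun v t => by
        have h := quad_expand (A i) (lam k)
          ((∑ l ∈ Finset.univ \ {i}, mv (A l) (x k l)) + sA B (y k) - c)
          (x k i) (x (k+1) i) v β (σ1 * β) t
        linarith)
    have h := hVI (xx i) (hxx i)
    have hcoeff : ⟪xx i - x (k+1) i,
        -(mv (A i)ᵀ tl)
          + β • ((σ1 + 1) • mv (A i)ᵀ (mv (A i) (x (k+1) i - x k i))
              - mv (A i)ᵀ (sA A (fun l => x (k+1) l - x k l)))⟫
        = -⟪lam k, mv (A i) (xx i - x (k+1) i)⟫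
          + β * ⟪mv (A i) (x (k+1) i)
              + ((∑ l ∈ Finset.univ \ {i}, mv (A l) (x k l)) + sA B (y k) - c),
              mv (A i) (xx i - x (k+1) i)⟫
          + (σ1 * β) * ⟪mv (A i) (x (k+1) i - x k i), mv (A i) (xx i - x (k+1) i)⟫ := by
      have hsplit : mv (A i) (x (k+1) i)
          + ((∑ l ∈ Finset.univ \ {i}, mv (A l) (x k l)) + sA B (y k) - c)
          = (sA A (x (k+1)) + sA B (y k) - c)
            - sA A (fun l => x (k+1) l - x k l) + mv (A i) (x (k+1) i - x k i) := by
        rw [sA_sub, mv_sub]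
        have he : (∑ l ∈ Finset.univ \ {i}, mv (A l) (x k l))
            = sA A (x k) - mv (A i) (x k i) := by
          rw [sA, Finset.sum_eq_add_sum_sdiff_singleton_of_mem (Finset.mem_univ i)]; abel
        rw [he]; abel
      rw [hsplit, htl]
      simp only [inner_add_right, inner_neg_right, inner_sub_right, real_inner_smul_right,
        ← inner_mv]
      simp only [inner_sub_left, inner_add_left, inner_sub_right, inner_add_right,
        real_inner_smul_left, real_inner_smul_right, inner_neg_left, inner_neg_right]
      simp only [real_inner_comm (mv (A i) (xx i - x (k+1) i))]
      ring
    rw [hcoeff]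
    exact h
  -- the y-block variational inequalities
  have hyineq : ∀ j, 0 ≤ g j (yy j) - g j (y (k+1) j) +
      ⟪yy j - y (k+1) j,
        -(mv (B j)ᵀ tl)
          + (((σ2 + 1) * β) • mv (B j)ᵀ (mv (B j) (y (k+1) j - y k j))
              - τ • mv (B j)ᵀ (tl - lam k))⟫ := by
    intro j
    have hVI := key_vi (hYcv j) (hg j) (hYmem j)
      (fun z => ((∑ i, f i (x (k+1) i)) + ∑ l ∈ Finset.univ \ {j}, g l (y k l))
        + (-⟪lamh k, mv (B j) z
              + (sA A (x (k+1)) + (∑ l ∈ Finset.univ \ {j}, mv (B l) (y k l)) - c)⟫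
          + β / 2 * ‖mv (B j) z
              + (sA A (x (k+1)) + (∑ l ∈ Finset.univ \ {j}, mv (B l) (y k l)) - c)‖ ^ 2
          + σ2 * β / 2 * ‖mv (B j) (z - y k j)‖ ^ 2))
      (fun z hz => by
        have h := (hymin k j).2 z hz
        rw [Lag_update_y, Lag_update_y] at h
        linarith)
      (fun v => -⟪lamh k, mv (B j) v⟫
        + β * ⟪mv (B j) (y (k+1) j)
            + (sA A (x (k+1)) + (∑ l ∈ Finset.univ \ {j}, mv (B l) (y k l)) - c), mv (B j) v⟫
        + (σ2 * β) * ⟪mv (B j) (y (k+1) j - y k j), mv (B j) v⟫)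
      (fun v => (β + σ2 * β) / 2 * ‖mv (B j) v‖ ^ 2)
      (fun v t => by
        have h := quad_expand (B j) (lamh k)
          (sA A (x (k+1)) + (∑ l ∈ Finset.univ \ {j}, mv (B l) (y k l)) - c)
          (y k j) (y (k+1) j) v β (σ2 * β) t
        linarith)
    have h := hVI (yy j) (hyy j)
    have hcoeff : ⟪yy j - y (k+1) j,
        -(mv (B j)ᵀ tl)
          + (((σ2 + 1) * β) • mv (B j)ᵀ (mv (B j) (y (k+1) j - y k j))
              - τ • mv (B j)ᵀ (tl - lam k))⟫
        = -⟪lamh k, mv (B j) (yy j - y (k+1) j)⟫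
          + β * ⟪mv (B j) (y (k+1) j)
              + (sA A (x (k+1)) + (∑ l ∈ Finset.univ \ {j}, mv (B l) (y k l)) - c),
              mv (B j) (yy j - y (k+1) j)⟫
          + (σ2 * β) * ⟪mv (B j) (y (k+1) j - y k j), mv (B j) (yy j - y (k+1) j)⟫ := by
      have hsplit : mv (B j) (y (k+1) j)
          + (sA A (x (k+1)) + (∑ l ∈ Finset.univ \ {j}, mv (B l) (y k l)) - c)
          = (sA A (x (k+1)) + sA B (y k) - c) + mv (B j) (y (k+1) j - y k j) := by
        rw [mv_sub]
        have he : (∑ l ∈ Finset.univ \ {j}, mv (B l) (y k l))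
            = sA B (y k) - mv (B j) (y k j) := by
          rw [sA, Finset.sum_eq_add_sum_sdiff_singleton_of_mem (Finset.mem_univ j)]; abel
        rw [he]; abel
      rw [hsplit, htl, hlamh k]
      simp only [inner_add_right, inner_neg_right, inner_sub_right, real_inner_smul_right,
        ← inner_mv]
      simp only [inner_sub_left, inner_add_left, inner_sub_right, inner_add_right,
        real_inner_smul_left, real_inner_smul_right, inner_neg_left, inner_neg_right]
      simp only [real_inner_comm (mv (B j) (yy j - y (k+1) j))]
      ring
    rw [hcoeff]
    exact h
  -- the multiplier component vanishes
  have hzero : (sA A (x (k+1)) + sA B (y (k+1)) - c)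
      + (-(sA B (fun j => y (k+1) j - y k j)) + β⁻¹ • (tl - lam k)) = 0 := by
    rw [sA_sub, htl]
    have h1 : (lam k - β • (sA A (x (k+1)) + sA B (y k) - c)) - lam k
        = -(β • (sA A (x (k+1)) + sA B (y k) - c)) := by abel
    rw [h1, smul_neg, smul_smul, inv_mul_cancel₀ hβ.ne', one_smul]
    abel
  have hinner0 : ⟪ll - tl,
      (sA A (x (k+1)) + sA B (y (k+1)) - c)
        + (-(sA B (fun j => y (k+1) j - y k j)) + β⁻¹ • (tl - lam k))⟫ = (0:ℝ) := by
    rw [hzero, inner_zero_right]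
  rw [ge_iff_le]
  have hsum1 : 0 ≤ ∑ i, (f i (xx i) - f i (x (k+1) i) +
      ⟪xx i - x (k+1) i,
        -(mv (A i)ᵀ tl)
          + β • ((σ1 + 1) • mv (A i)ᵀ (mv (A i) (x (k+1) i - x k i))
              - mv (A i)ᵀ (sA A (fun l => x (k+1) l - x k l)))⟫) :=
    Finset.sum_nonneg fun i _ => hxineq i
  have hsum2 : 0 ≤ ∑ j, (g j (yy j) - g j (y (k+1) j) +
      ⟪yy j - y (k+1) j,
        -(mv (B j)ᵀ tl)
          + (((σ2 + 1) * β) • mv (B j)ᵀ (mv (B j) (y (k+1) j - y k j))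
              - τ • mv (B j)ᵀ (tl - lam k))⟫) :=
    Finset.sum_nonneg fun j _ => hyineq j
  simp only [Finset.sum_add_distrib, Finset.sum_sub_distrib] at hsum1 hsum2
  linarith [hinner0]
end

section
/- Suppose β > 0, σ_1 > p − 1, σ_2 > q − 1, τ ≤ 1 and τ + s > 0, and suppose each A_i ∈ ℝ^{n×m_i} and each B_j ∈ ℝ^{n×d_j} has full column rank. Then the quadratic form ‖(x,y,λ)‖_H² = β[(σ_1+1)Σ_{i=1}^p‖A_i x_i‖² − ‖Σ_{i=1}^p A_i x_i‖²] + (σ_2+1)β Σ_{j=1}^q‖B_j y_j‖² − (τs/(τ+s))β‖Σ_{j=1}^q B_j y_j‖² − (2τ/(τ+s))⟨Σ_{j=1}^q B_j y_j, λ⟩ + (1/(β(τ+s)))‖λ‖² is positive definite on ℝ^{m_1}×⋯×ℝ^{m_p}×ℝ^{d_1}×⋯×ℝ^{d_q}×ℝ^n, i.e., ‖(x,y,λ)‖_H² > 0 whenever (x,y,λ) ≠ 0. -/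
open scoped RealInnerProductSpace
open Matrix Filter

/-- The `H`-quadratic form `‖(x,y,λ)‖_H²`. -/
noncomputable def Hform {p q n : ℕ} {m : Fin p → ℕ} {d : Fin q → ℕ}
    (A : ∀ i, Matrix (Fin n) (Fin (m i)) ℝ)
    (B : ∀ j, Matrix (Fin n) (Fin (d j)) ℝ)
    (β σ1 σ2 τ s : ℝ)
    (x : ∀ i, EuclideanSpace ℝ (Fin (m i)))
    (y : ∀ j, EuclideanSpace ℝ (Fin (d j)))
    (lam : EuclideanSpace ℝ (Fin n)) : ℝ :=
  β * ((σ1 + 1) * (∑ i, ‖mv (A i) (x i)‖ ^ 2) - ‖sA A x‖ ^ 2)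
    + (σ2 + 1) * β * (∑ j, ‖mv (B j) (y j)‖ ^ 2)
    - τ * s / (τ + s) * β * ‖sA B y‖ ^ 2
    - 2 * τ / (τ + s) * ⟪sA B y, lam⟫
    + 1 / (β * (τ + s)) * ‖lam‖ ^ 2

/-- The `G`-quadratic form `‖(x,y,λ)‖_G²`. -/
noncomputable def Gform {p q n : ℕ} {m : Fin p → ℕ} {d : Fin q → ℕ}
    (A : ∀ i, Matrix (Fin n) (Fin (m i)) ℝ)
    (B : ∀ j, Matrix (Fin n) (Fin (d j)) ℝ)
    (β σ1 σ2 τ s : ℝ)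
    (x : ∀ i, EuclideanSpace ℝ (Fin (m i)))
    (y : ∀ j, EuclideanSpace ℝ (Fin (d j)))
    (lam : EuclideanSpace ℝ (Fin n)) : ℝ :=
  β * ((σ1 + 1) * (∑ i, ‖mv (A i) (x i)‖ ^ 2) - ‖sA A x‖ ^ 2)
    + (σ2 + 1) * β * (∑ j, ‖mv (B j) (y j)‖ ^ 2)
    - s * β * ‖sA B y‖ ^ 2
    + 2 * (s - 1) * ⟪sA B y, lam⟫
    + (2 - τ - s) / β * ‖lam‖ ^ 2

/-- The `H_y`-quadratic form `‖y‖_{H_y}² = β[(σ₂+1)Σ_j‖B_j y_j‖² − ‖By‖²]`. -/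
noncomputable def Hyform {q n : ℕ} {d : Fin q → ℕ}
    (B : ∀ j, Matrix (Fin n) (Fin (d j)) ℝ)
    (β σ2 : ℝ)
    (y : ∀ j, EuclideanSpace ℝ (Fin (d j))) : ℝ :=
  β * ((σ2 + 1) * (∑ j, ‖mv (B j) (y j)‖ ^ 2) - ‖sA B y‖ ^ 2)

lemma mv_ne_zero {n m : ℕ} (M : Matrix (Fin n) (Fin m) ℝ)
    (h : LinearIndependent ℝ (fun l => Mᵀ l)) {v : EuclideanSpace ℝ (Fin m)} (hv : v ≠ 0) :
    mv M v ≠ 0 := by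
  intro h0
  apply hv
  have hsum : ∑ l, v l • Mᵀ l = 0 := by
    have : (M.mulVec v : Fin n → ℝ) = 0 := congrArg WithLp.ofLp h0
    rw [← this]
    ext k
    simp [Matrix.mulVec, dotProduct, Matrix.transpose, Finset.sum_apply, mul_comm]
  have := Fintype.linearIndependent_iff.mp h (fun l => v l) hsum
  ext i
  exact this i

lemma norm_sum_sq_le {E : Type*} [NormedAddCommGroup E] {p : ℕ}
    (v : Fin p → E) : ‖∑ i, v i‖ ^ 2 ≤ (p : ℝ) * ∑ i, ‖v i‖ ^ 2 := by
  have h1 : ‖∑ i, v i‖ ≤ ∑ i, ‖v i‖ := norm_sum_le _ _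
  have h2 := sq_sum_le_card_mul_sum_sq (s := (Finset.univ : Finset (Fin p)))
    (f := fun i => ‖v i‖)
  simp only [Finset.card_univ, Fintype.card_fin] at h2
  have h3 : ‖∑ i, v i‖ ^ 2 ≤ (∑ i, ‖v i‖) ^ 2 := by
    apply pow_le_pow_left₀ (norm_nonneg _) h1
  simpa using h3.trans h2

lemma amgm_inner {n : ℕ} (u lam : EuclideanSpace ℝ (Fin n)) {a : ℝ} (c : ℝ) (ha : 0 < a) :
    2 * c * ⟪u, lam⟫ ≤ a * ‖u‖ ^ 2 + c ^ 2 / a * ‖lam‖ ^ 2 := by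
  have h0 : (0:ℝ) ≤ ‖a • u - c • lam‖ ^ 2 := sq_nonneg _
  have hexp : ‖a • u - c • lam‖ ^ 2
      = a ^ 2 * ‖u‖ ^ 2 - 2 * a * c * ⟪u, lam⟫ + c ^ 2 * ‖lam‖ ^ 2 := by
    rw [@norm_sub_sq_real]
    rw [real_inner_smul_left, real_inner_smul_right, norm_smul, norm_smul]
    rw [mul_pow, mul_pow, Real.norm_eq_abs, Real.norm_eq_abs, sq_abs, sq_abs]
    ring
  have hc : c ^ 2 / a * a = c ^ 2 := div_mul_cancel₀ _ (ne_of_gt ha)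
  nlinarith [h0, hexp, ha, mul_pos ha ha]

-- STATEMENT 4
set_option maxHeartbeats 1000000 in
/-- positive definiteness of the `H`-quadratic form when `β > 0`,
`σ₁ > p−1`, `σ₂ > q−1`, `τ ≤ 1`, `τ + s > 0`, and all `A_i`, `B_j` have full
column rank. -/
theorem stmt4 {p q n : ℕ} (hp : 1 ≤ p) (hq : 1 ≤ q)
    {m : Fin p → ℕ} {d : Fin q → ℕ}
    (A : ∀ i, Matrix (Fin n) (Fin (m i)) ℝ)
    (B : ∀ j, Matrix (Fin n) (Fin (d j)) ℝ)
    (hA : ∀ i, LinearIndependent ℝ (fun l => (A i)ᵀ l))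
    (hB : ∀ j, LinearIndependent ℝ (fun l => (B j)ᵀ l))
    (β σ1 σ2 τ s : ℝ) (hβ : 0 < β)
    (hσ1 : (p : ℝ) - 1 < σ1) (hσ2 : (q : ℝ) - 1 < σ2)
    (hτ : τ ≤ 1) (hτs : 0 < τ + s)
    (x : ∀ i, EuclideanSpace ℝ (Fin (m i)))
    (y : ∀ j, EuclideanSpace ℝ (Fin (d j)))
    (lam : EuclideanSpace ℝ (Fin n))
    (hne : ¬(x = 0 ∧ y = 0 ∧ lam = 0)) :
    0 < Hform A B β σ1 σ2 τ s x y lam := by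
  have hq1 : (1:ℝ) ≤ q := by exact_mod_cast hq
  have hp1 : (1:ℝ) ≤ p := by exact_mod_cast hp
  have hq0 : (0:ℝ) < q := by linarith
  have ht : 0 < τ + s := hτs
  unfold Hform
  set T := ∑ i, ‖mv (A i) (x i)‖ ^ 2 with hTdef
  set S := ∑ j, ‖mv (B j) (y j)‖ ^ 2 with hSdef
  set u := sA B y with hudef
  set w := sA A x with hwdef
  have hT0 : 0 ≤ T := Finset.sum_nonneg fun i _ => sq_nonneg _
  have hS0 : 0 ≤ S := Finset.sum_nonneg fun j _ => sq_nonneg _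
  have hwT : ‖w‖ ^ 2 ≤ (p:ℝ) * T := by
    rw [hwdef, hTdef]; unfold sA; exact norm_sum_sq_le _
  have huS : ‖u‖ ^ 2 ≤ (q:ℝ) * S := by
    rw [hudef, hSdef]; unfold sA; exact norm_sum_sq_le _
  have hTx : x ≠ 0 → 0 < T := by
    intro hx
    obtain ⟨i, hi⟩ : ∃ i, x i ≠ 0 := by
      by_contra h; push_neg at h; exact hx (funext h)
    have h1 : 0 < ‖mv (A i) (x i)‖ ^ 2 :=
      pow_pos (norm_pos_iff.mpr (mv_ne_zero (A i) (hA i) hi)) 2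
    rw [hTdef]
    exact lt_of_lt_of_le h1
      (Finset.single_le_sum (f := fun i => ‖mv (A i) (x i)‖ ^ 2)
        (fun j _ => sq_nonneg _) (Finset.mem_univ i))
  have hSy : y ≠ 0 → 0 < S := by
    intro hy
    obtain ⟨j, hj⟩ : ∃ j, y j ≠ 0 := by
      by_contra h; push_neg at h; exact hy (funext h)
    have h1 : 0 < ‖mv (B j) (y j)‖ ^ 2 :=
      pow_pos (norm_pos_iff.mpr (mv_ne_zero (B j) (hB j) hj)) 2
    rw [hSdef]
    exact lt_of_lt_of_le h1
      (Finset.single_le_sum (f := fun j => ‖mv (B j) (y j)‖ ^ 2)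
        (fun i _ => sq_nonneg _) (Finset.mem_univ j))
  -- constants
  set κ := (max ((q:ℝ) * τ) 0 + (σ2 + 1)) / 2 with hκdef
  have hqτσ : (q:ℝ) * τ < σ2 + 1 := by nlinarith
  have hσ2pos : (0:ℝ) < σ2 + 1 := by linarith
  have hmaxlt : max ((q:ℝ) * τ) 0 < σ2 + 1 := max_lt hqτσ hσ2pos
  have hκ0 : 0 ≤ κ := by
    have := le_max_right ((q:ℝ) * τ) 0
    rw [hκdef]; linarith
  have hκτ : (q:ℝ) * τ < κ := by
    have := le_max_left ((q:ℝ) * τ) 0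
    rw [hκdef]; linarith
  have hκσ : κ < σ2 + 1 := by rw [hκdef]; linarith
  have hκq : τ < κ / q := by
    rw [lt_div_iff₀ hq0]; linarith [hκτ, mul_comm (q:ℝ) τ]
  have hγτ : τ * s / (τ + s) ≤ τ := by
    rw [div_le_iff₀ ht]; nlinarith [sq_nonneg τ]
  set a := β * (κ / q - τ * s / (τ + s)) with hadef
  have ha : 0 < a := by
    rw [hadef]; exact mul_pos hβ (by linarith)
  -- key coefficient positivity
  have hsum : τ ^ 2 / (τ + s) + τ * s / (τ + s) = τ := by
    field_simp
  have hD : τ ^ 2 / (τ + s) < κ / q - τ * s / (τ + s) := by linarith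
  have hτ2 : 0 ≤ τ ^ 2 / (τ + s) := div_nonneg (sq_nonneg τ) ht.le
  have hc3 : 0 < 1 / (β * (τ + s)) - (τ / (τ + s)) ^ 2 / a := by
    rw [sub_pos, div_lt_div_iff₀ ha (by positivity)]
    have hid : (τ / (τ + s)) ^ 2 * (β * (τ + s)) = β * (τ ^ 2 / (τ + s)) := by
      field_simp
    rw [hid, hadef, one_mul]
    exact mul_lt_mul_of_pos_left hD hβ
  -- amgm bound
  have amgm := amgm_inner u lam (τ / (τ + s)) ha
  -- piecewise bounds
  have h1 : β * ((σ1 + 1) * T - ‖w‖ ^ 2) ≥ β * ((σ1 + 1) - p) * T := by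
    linarith [mul_nonneg hβ.le (sub_nonneg.mpr hwT)]
  have h2 : (σ2 + 1) * β * S ≥ β * ((σ2 + 1) - κ) * S + β * (κ / q) * ‖u‖ ^ 2 := by
    have hnn : 0 ≤ β * κ * ((q:ℝ) * S - ‖u‖ ^ 2) :=
      mul_nonneg (mul_nonneg hβ.le hκ0) (sub_nonneg.mpr huS)
    have hdiv : 0 ≤ β * κ * ((q:ℝ) * S - ‖u‖ ^ 2) / q := div_nonneg hnn hq0.le
    have hid : (σ2 + 1) * β * S - (β * ((σ2 + 1) - κ) * S + β * (κ / q) * ‖u‖ ^ 2)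
        = β * κ * ((q:ℝ) * S - ‖u‖ ^ 2) / q := by
      field_simp; ring
    linarith [hdiv, hid]
  have h3 : - (τ * s / (τ + s) * β * ‖u‖ ^ 2) - 2 * τ / (τ + s) * ⟪u, lam⟫
      ≥ - (β * (κ / q) * ‖u‖ ^ 2) - (τ / (τ + s)) ^ 2 / a * ‖lam‖ ^ 2 := by
    have hco2 : (τ * s / (τ + s) * β) * ‖u‖ ^ 2 + a * ‖u‖ ^ 2
        = β * (κ / q) * ‖u‖ ^ 2 := by rw [hadef]; ring
    have h2c : 2 * τ / (τ + s) * ⟪u, lam⟫ = 2 * (τ / (τ + s)) * ⟪u, lam⟫ := by ring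
    linarith [amgm, hco2, h2c]
  have hlam0 : 0 ≤ ‖lam‖ ^ 2 := sq_nonneg _
  have hbound : β * ((σ1 + 1) * T - ‖w‖ ^ 2) + (σ2 + 1) * β * S
      - τ * s / (τ + s) * β * ‖u‖ ^ 2 - 2 * τ / (τ + s) * ⟪u, lam⟫
      + 1 / (β * (τ + s)) * ‖lam‖ ^ 2
      ≥ β * ((σ1 + 1) - p) * T + β * ((σ2 + 1) - κ) * S
        + (1 / (β * (τ + s)) - (τ / (τ + s)) ^ 2 / a) * ‖lam‖ ^ 2 := by
    linarith [h1, h2, h3]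
  -- positive coefficients
  have hc1 : 0 < β * ((σ1 + 1) - (p:ℝ)) := mul_pos hβ (by linarith)
  have hc2 : 0 < β * ((σ2 + 1) - κ) := mul_pos hβ (by linarith)
  -- case analysis
  by_cases hx : x = 0
  · by_cases hy : y = 0
    · have hl : lam ≠ 0 := fun h => hne ⟨hx, hy, h⟩
      have hlpos : 0 < ‖lam‖ ^ 2 := pow_pos (norm_pos_iff.mpr hl) 2
      linarith [hbound, mul_pos hc3 hlpos, mul_nonneg hc1.le hT0, mul_nonneg hc2.le hS0]
    · have hSpos := hSy hy
      linarith [hbound, mul_pos hc2 hSpos, mul_nonneg hc1.le hT0, mul_nonneg hc3.le hlam0]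
  · have hTpos := hTx hx
    linarith [hbound, mul_pos hc1 hTpos, mul_nonneg hc2.le hS0, mul_nonneg hc3.le hlam0]
end
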